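/- Let f be a homeomorphism of a compact metric space M whose strong unstable 'foliation' satisfies: (i) for every ε > 0 there is L > 0 such that every leaf-ball of radius L is ε-dense; and (ii) f uniformly expands leaf distances, i.e. there exists τ > 1 with d_leaf(f(x), f(y)) ≥ τ·d_leaf(x,y) for points on the same leaf. Then f is topologically mixing: for any nonempty open sets U, V there exists N such that f^n(U) ∩ V ≠ ∅ for all n ≥ N. -/

import Mathlib

/-- A set `S` is `ε`-dense if every point lies within distance `ε` of `S`. -/
def EpsDense {M : Type*} [MetricSpace M] (ε : ℝ) (S : Set M) : Prop :=
  ∀ m : M, ∃ s ∈ S, dist m s ≤ ε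

/-- A homeomorphism of a compact metric space whose (strong unstable) foliation has
uniformly dense leaf balls and which uniformly expands leaf distances is topologically
mixing. Here `B x L` is the leaf ball of radius `L` (in the intrinsic leaf metric)
around `x`; the hypotheses state: monotonicity in the radius, that every nonempty open
set contains a leaf ball of positive radius around each of its points, uniform density
of leaf `L`-balls for suitable `L = L(ε)`, and uniform expansion of leaf distances by
a factor `τ > 1` (expressed via `B (f x) (τ * L) ⊆ f '' (B x L)`). -/
theorem mixing_of_expanding_minimal_foliation
    {M : Type*} [MetricSpace M] [CompactSpace M] [Nonempty M]
    (f : M ≃ₜ M) (B : M → ℝ → Set M)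
    (hmono : ∀ x : M, Monotone (B x))
    (hplaque : ∀ U : Set M, IsOpen U → ∀ x ∈ U, ∃ r > (0 : ℝ), B x r ⊆ U)
    (hdense : ∀ ε > (0 : ℝ), ∃ L > (0 : ℝ), ∀ x : M, EpsDense ε (B x L))
    (τ : ℝ) (hτ : 1 < τ)
    (hexp : ∀ (x : M) (L : ℝ), 0 < L → B (f x) (τ * L) ⊆ f '' (B x L)) :
    ∀ U V : Set M, IsOpen U → U.Nonempty → IsOpen V → V.Nonempty →
      ∃ N : ℕ, ∀ n ≥ N, ((⇑f)^[n] '' U ∩ V).Nonempty := by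
  intro U V hU hUne hV hVne
  obtain ⟨x, hx⟩ := hUne
  obtain ⟨r, hr, hrU⟩ := hplaque U hU x hx
  obtain ⟨v, hv⟩ := hVne
  obtain ⟨ε', hε', hball⟩ := Metric.isOpen_iff.1 hV v hv
  obtain ⟨L, hL, hLd⟩ := hdense (ε'/2) (by linarith)
  have hτ0 : (0 : ℝ) < τ := lt_trans one_pos hτ
  -- iterated expansion
  have key : ∀ n : ℕ, B ((⇑f)^[n] x) (τ^n * r) ⊆ (⇑f)^[n] '' (B x r) := by
    intro n
    induction n with
    | zero => simp
    | succ n ih =>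
      have h1 : B ((⇑f)^[n+1] x) (τ^(n+1) * r) ⊆ f '' (B ((⇑f)^[n] x) (τ^n * r)) := by
        rw [Function.iterate_succ_apply']
        have : τ^(n+1) * r = τ * (τ^n * r) := by ring
        rw [this]
        exact hexp _ _ (by positivity)
      refine h1.trans ?_
      intro y hy
      obtain ⟨z, hz, rfl⟩ := hy
      obtain ⟨w, hw, rfl⟩ := ih hz
      exact ⟨w, hw, Function.iterate_succ_apply' f n w⟩
  -- choose N with τ^N * r ≥ L
  obtain ⟨N, hN⟩ := pow_unbounded_of_one_lt (L / r) hτ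
  refine ⟨N, fun n hn => ?_⟩
  have hτn : L ≤ τ^n * r := by
    have h1 : τ^N ≤ τ^n := pow_le_pow_right₀ (le_of_lt hτ) hn
    have := (div_le_iff₀ hr).1 (le_of_lt (hN.trans_le h1))
    linarith
  have hsub : B ((⇑f)^[n] x) L ⊆ (⇑f)^[n] '' U := by
    refine ((hmono _ hτn).trans (key n)).trans ?_
    exact Set.image_mono hrU
  obtain ⟨s, hs, hds⟩ := hLd ((⇑f)^[n] x) v
  refine ⟨s, hsub hs, hball ?_⟩
  simp only [Metric.mem_ball]
  calc dist s v = dist v s := dist_comm s v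
    _ ≤ ε'/2 := hds
    _ < ε' := by linarith
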